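/- Let s(x) = αx² + βx + γ with α ≠ 0, let S = {(x, s(x)) : x ∈ ℝ} ⊆ ℝ², and let (x̄, ȳ) ∈ ℝ² with ȳ ≠ s(x̄). Set p := −(β² + 4αȳ − 4αγ − 2)/(4α²), q := −(2αx̄ + β)/(4α³), and Δ := (p/3)³ + (q/2)². If Δ < 0 and q < 0, then the set of points of S nearest to (x̄, ȳ) (in the Euclidean distance of ℝ²) is the singleton {(x₄, s(x₄))}, where x₄ := −β/(2α) + 2√(−p/3)·cos(θ/3) and θ := arccos((−q/2)/(−p/3)^{3/2}). -/

import Mathlib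

set_option maxHeartbeats 800000

private lemma quart_aux (p q u u₀ : ℝ) (h : u₀^3 + p*u₀ + q = 0) :
    u^4 + 2*p*u^2 + 4*q*u - (u₀^4 + 2*p*u₀^2 + 4*q*u₀)
      = (u-u₀)^2 * ((u+u₀)^2 + 2*(u₀^2+p)) := by
  linear_combination (4*(u - u₀)) * h

private lemma sq_lt_imp (a b : ℝ) (hb : 0 < b) (h : a^2 < b^2) : a < b := by nlinarith

private lemma sqrt_le_imp (a b : ℝ) (ha : 0 ≤ a) (hb : 0 ≤ b)
    (h : Real.sqrt a ≤ Real.sqrt b) : a ≤ b := by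
  nlinarith [Real.sq_sqrt ha, Real.sq_sqrt hb, Real.sqrt_nonneg a, Real.sqrt_nonneg b]

private lemma c34_aux (c : ℝ) (h : Real.sqrt 3 / 2 < c) : 3/4 < c^2 := by
  have h3 : Real.sqrt 3 ^ 2 = 3 := Real.sq_sqrt (by norm_num)
  nlinarith [Real.sqrt_nonneg 3]

private lemma pos_aux (m c : ℝ) (hm : 0 < m) (hc : 3/4 < c^2) :
    0 < (2*m*c)^2 - 3*m^2 := by
  have h1 : 0 < c^2 - 3/4 := by linarith
  have h2 : 0 < m^2 := by positivity
  nlinarith [mul_pos h1 h2]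

/-- projection onto the graph of `s(x) = αx² + βx + γ` in the case
`Δ < 0` and `q < 0`. -/
theorem stmt_9 (α β γ xb yb p q Δ θ x₄ : ℝ) (hα : α ≠ 0)
    (hy : yb ≠ α * xb ^ 2 + β * xb + γ)
    (hp : p = -(β ^ 2 + 4 * α * yb - 4 * α * γ - 2) / (4 * α ^ 2))
    (hq : q = -(2 * α * xb + β) / (4 * α ^ 3))
    (hΔ : Δ = (p / 3) ^ 3 + (q / 2) ^ 2)
    (hθ : θ = Real.arccos ((-q / 2) / (-p / 3) ^ ((3 : ℝ) / 2)))
    (hx₄ : x₄ = -β / (2 * α) + 2 * Real.sqrt (-p / 3) * Real.cos (θ / 3))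
    (hcase : Δ < 0 ∧ q < 0) :
    {z : ℝ × ℝ | (∃ x : ℝ, z = (x, α * x ^ 2 + β * x + γ)) ∧
        ∀ w : ℝ, Real.sqrt ((xb - z.1) ^ 2 + (yb - z.2) ^ 2) ≤
          Real.sqrt ((xb - w) ^ 2 + (yb - (α * w ^ 2 + β * w + γ)) ^ 2)} =
      {(x₄, α * x₄ ^ 2 + β * x₄ + γ)} := by
  obtain ⟨hΔneg, hqneg⟩ := hcase
  obtain ⟨f, hf⟩ : ∃ f : ℝ → ℝ, f = fun x => (xb - x)^2 + (yb - (α*x^2+β*x+γ))^2 := ⟨_, rfl⟩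
  have hfval : ∀ x : ℝ, f x = (xb - x)^2 + (yb - (α*x^2+β*x+γ))^2 := by
    intro x; rw [hf]
  have hΔ' : (p/3)^3 + (q/2)^2 < 0 := by rw [← hΔ]; exact hΔneg
  have hp0 : p < 0 := by
    by_contra h
    push_neg at h
    have h1 : 0 ≤ (p/3)^3 := by positivity
    have h2 : 0 ≤ (q/2)^2 := sq_nonneg _
    linarith
  have hm0 : (0:ℝ) < -p/3 := by linarith
  set m := Real.sqrt (-p/3) with hmdef
  have hm : 0 < m := Real.sqrt_pos.2 hm0
  have hm2 : m^2 = -p/3 := Real.sq_sqrt hm0.le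
  have hm3 : (-p/3) ^ ((3:ℝ)/2) = m^3 := by
    rw [hmdef, Real.sqrt_eq_rpow, ← Real.rpow_natCast ((-p/3) ^ ((1:ℝ)/2)) 3,
      ← Real.rpow_mul hm0.le]
    norm_num
  have hm3pos : 0 < m^3 := by positivity
  set A := (-q/2)/m^3 with hA
  have hA0 : 0 < A := div_pos (by linarith) hm3pos
  have hm6 : (m^3)^2 = (-p/3)^3 := by rw [← hm2]; ring
  have hA1 : A < 1 := by
    rw [hA, div_lt_one hm3pos]
    have hh : (p/3)^3 = -((-p/3)^3) := by ring
    have h1 : (-q/2)^2 < (m^3)^2 := by rw [hm6]; nlinarith [hΔ']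
    exact sq_lt_imp _ _ hm3pos h1
  have hcosθ : Real.cos θ = A := by
    rw [hθ, hm3, ← hA]; exact Real.cos_arccos (by linarith) hA1.le
  have hθ0 : 0 < θ := by rw [hθ]; exact Real.arccos_pos.2 (by rw [hm3, ← hA]; exact hA1)
  have hθpi2 : θ < Real.pi/2 := by
    rw [hθ]; exact Real.arccos_lt_pi_div_two.2 (by rw [hm3, ← hA]; exact hA0)
  set cth := Real.cos (θ/3) with hcth
  have hclow : Real.sqrt 3 / 2 < cth := by
    rw [hcth, ← Real.cos_pi_div_six]
    apply Real.cos_lt_cos_of_nonneg_of_le_pi (by positivity)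
    · linarith [Real.pi_pos]
    · linarith [Real.pi_pos]
  have hc34 : 3/4 < cth^2 := c34_aux cth hclow
  have htriple : Real.cos θ = 4*cth^3 - 3*cth := by
    have h := Real.cos_three_mul (θ/3)
    rw [show 3*(θ/3) = θ by ring] at h
    rw [h]
  obtain ⟨u₀, hu₀def⟩ : ∃ u : ℝ, u = x₄ + β/(2*α) := ⟨_, rfl⟩
  have hu₀ : u₀ = 2*m*cth := by rw [hu₀def, hx₄]; field_simp; ring
  have hcrit : u₀^3 + p*u₀ + q = 0 := by
    have hqA : 2*m^3*A = -q := by rw [hA]; field_simp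
    have hp3 : p = -3*m^2 := by linarith
    have h1 : 2*m^3*(4*cth^3 - 3*cth) = -q := by rw [← htriple, hcosθ]; exact hqA
    rw [hu₀, hp3]
    linear_combination h1
  have hpos : 0 < u₀^2 + p := by
    have hp3 : p = -3*m^2 := by linarith
    have h5 := pos_aux m cth hm hc34
    rw [hu₀, hp3]
    linarith
  have hfx : ∀ x : ℝ, f x = α^2*((x+β/(2*α))^4 + 2*p*(x+β/(2*α))^2 + 4*q*(x+β/(2*α)))
      + ((xb+β/(2*α))^2 + (γ - β^2/(4*α) - yb)^2) := by
    intro x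
    rw [hfval x, hp, hq]
    field_simp
    ring
  have hdiff : ∀ x : ℝ, f x - f x₄ = α^2 * (x-x₄)^2 * ((x+x₄+β/α)^2 + 2*(u₀^2+p)) := by
    intro x
    have h := quart_aux p q (x+β/(2*α)) u₀ hcrit
    have e1 : x+β/(2*α) - u₀ = x - x₄ := by rw [hu₀def]; ring
    have e2 : x+β/(2*α) + u₀ = x + x₄ + β/α := by rw [hu₀def]; field_simp; ring
    rw [e1, e2] at h
    rw [hfx x, hfx x₄]
    have hu4 : u₀^4 + 2*p*u₀^2 + 4*q*u₀
        = (x₄+β/(2*α))^4 + 2*p*(x₄+β/(2*α))^2 + 4*q*(x₄+β/(2*α)) := by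
      rw [hu₀def]
    linear_combination α^2 * h + α^2 * hu4
  have hmin : ∀ x : ℝ, f x₄ ≤ f x := by
    intro x
    have h := hdiff x
    have hterm : 0 ≤ α^2 * (x-x₄)^2 * ((x+x₄+β/α)^2 + 2*(u₀^2+p)) := by
      have h2 : 0 ≤ (x+x₄+β/α)^2 + 2*(u₀^2+p) := by
        have := sq_nonneg (x+x₄+β/α); linarith
      positivity
    linarith
  have hstrict : ∀ x : ℝ, x ≠ x₄ → f x₄ < f x := by
    intro x hx
    have h := hdiff x
    have hne : x - x₄ ≠ 0 := sub_ne_zero.2 hx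
    have h1 : 0 < (x-x₄)^2 := by positivity
    have h2 : 0 < (x+x₄+β/α)^2 + 2*(u₀^2+p) := by
      have := sq_nonneg (x+x₄+β/α); linarith
    have h3 : 0 < α^2 := by positivity
    have h4 := mul_pos (mul_pos h3 h1) h2
    linarith
  ext z
  simp only [Set.mem_setOf_eq, Set.mem_singleton_iff]
  constructor
  · rintro ⟨⟨x, rfl⟩, hnear⟩
    have hx : x = x₄ := by
      by_contra hne
      have h1 := hnear x₄
      simp only at h1
      have hsq : Real.sqrt (f x) ≤ Real.sqrt (f x₄) := by
        rw [hfval x, hfval x₄]; exact h1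
      have hx4n : (0:ℝ) ≤ f x₄ := by rw [hfval]; positivity
      have hxn : (0:ℝ) ≤ f x := by rw [hfval]; positivity
      have hfle : f x ≤ f x₄ := sqrt_le_imp _ _ hxn hx4n hsq
      exact absurd hfle (not_le.2 (hstrict x hne))
    rw [hx]
  · rintro rfl
    refine ⟨⟨x₄, rfl⟩, fun w => ?_⟩
    simp only
    have := Real.sqrt_le_sqrt (hmin w)
    rw [hfval x₄, hfval w] at this
    exact this
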